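/- Let T be a tree on n ≥ 1 vertices rooted at r and let f be a DFS-mapping of (T, r). Define the simple graph G_f on vertex set {1, …, 2n−1} whose edges are exactly: {i, i+1} for every 1 ≤ i < 2n−1, and {i, j} for every pair i < j such that f(i) = f(j) and f(k) ≠ f(i) for every k with i < k < j. Then G_f is path-outerplanar with witness the natural order on {1, …, 2n−1}. -/

import Mathlib

/-- `c` is a child of `v` in the tree `T` rooted at `r`. -/
def IsChild {V : Type*} (T : SimpleGraph V) (r v c : V) : Prop :=
  T.Adj v c ∧ T.dist c r = T.dist v r + 1

/-- `p` is the parent of `v` in the tree `T` rooted at `r`. -/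
def IsParent {V : Type*} (T : SimpleGraph V) (r v p : V) : Prop :=
  T.Adj v p ∧ T.dist p r + 1 = T.dist v r

/-- `f` (with `f ⟨0,_⟩` playing the role of `f(1)`) is a DFS-mapping of the tree `T`
rooted at `r`. -/
def IsDFSMapping {V : Type*} (T : SimpleGraph V) (r : V) {m : ℕ} (f : Fin m → V) : Prop :=
  (∀ h : 0 < m, f ⟨0, h⟩ = r) ∧
  ∀ i : Fin m, ∀ h : (i : ℕ) + 1 < m,
    ((∃ c, IsChild T r (f i) c ∧ ∀ j : Fin m, j < i → f j ≠ c) →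
      (IsChild T r (f i) (f ⟨(i : ℕ) + 1, h⟩) ∧
        ∀ j : Fin m, j < i → f j ≠ f ⟨(i : ℕ) + 1, h⟩)) ∧
    ((¬ ∃ c, IsChild T r (f i) c ∧ ∀ j : Fin m, j < i → f j ≠ c) →
      IsParent T r (f i) (f ⟨(i : ℕ) + 1, h⟩))

/-- `G` on `Fin N` is path-outerplanar with witness the natural order. -/
def IsPathOuterplanarWitness {N : ℕ} (G : SimpleGraph (Fin N)) : Prop :=
  (∀ i : Fin N, ∀ h : (i : ℕ) + 1 < N, G.Adj i ⟨(i : ℕ) + 1, h⟩) ∧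
  (∀ a b c d : Fin N, G.Adj a b → G.Adj c d → a < b → c < d →
    (b ≤ c) ∨ (d ≤ a) ∨ (a ≤ c ∧ d ≤ b) ∨ (c ≤ a ∧ b ≤ d))

section Aux

variable {V : Type*} [DecidableEq V] {T : SimpleGraph V}

/-- In a tree, every path between two vertices has length equal to the distance. -/
lemma tree_path_length (hT : T.IsTree) {u v : V} (p : T.Walk u v) (hp : p.IsPath) :
    p.length = T.dist u v := by
  obtain ⟨q, hq, hlen⟩ := hT.isConnected.exists_path_of_dist u v
  have h := (hT.existsUnique_path u v).unique hp hq
  rw [h, hlen]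

/-- In a tree, the support of a path is contained in the support of any walk with the
same endpoints. -/
lemma tree_path_support_subset (hT : T.IsTree) {u v : V} (p q : T.Walk u v)
    (hp : p.IsPath) : p.support ⊆ q.support := by
  have h : p = q.bypass := (hT.existsUnique_path u v).unique hp q.bypass_isPath
  rw [h]
  exact q.support_bypass_subset

/-- In a tree, every walk from a child `c` to the root `r` passes through the parent `x`. -/
lemma parent_mem_walk_support (hT : T.IsTree) {x c r : V} (hadj : T.Adj x c)
    (hd : T.dist c r = T.dist x r + 1) (w : T.Walk c r) : x ∈ w.support := by
  obtain ⟨p, hp, hlen⟩ := hT.isConnected.exists_path_of_dist c r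
  apply tree_path_support_subset hT p w hp
  by_contra hx
  have hpath : (SimpleGraph.Walk.cons hadj p).IsPath := hp.cons hx
  have h2 := tree_path_length hT _ hpath
  rw [SimpleGraph.Walk.length_cons, hlen, hd] at h2
  omega

/-- If every walk from `x` to `r` passes through `v ≠ x`, then `v` is strictly closer
to `r`. -/
lemma dist_lt_of_mem_all (hT : T.IsTree) {x v r : V} (hne : x ≠ v)
    (h : ∀ w : T.Walk x r, v ∈ w.support) : T.dist v r < T.dist x r := by
  obtain ⟨p, hp, hlen⟩ := hT.isConnected.exists_path_of_dist x r
  have hv := h p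
  have hsplit := congrArg SimpleGraph.Walk.length (p.take_spec hv)
  rw [SimpleGraph.Walk.length_append] at hsplit
  have h1 : T.dist x v ≤ (p.takeUntil v hv).length := SimpleGraph.dist_le _
  have h2 : T.dist v r ≤ (p.dropUntil v hv).length := SimpleGraph.dist_le _
  have h3 : 0 < T.dist x v := hT.isConnected.pos_dist_of_ne hne
  omega

variable {r : V} {m : ℕ} {f : Fin m → V}

/-- Each DFS step goes to a child or to the parent. -/
lemma step_cp (hf : IsDFSMapping T r f) (i : Fin m) (h : (i : ℕ) + 1 < m) :
    IsChild T r (f i) (f ⟨(i : ℕ) + 1, h⟩) ∨ IsParent T r (f i) (f ⟨(i : ℕ) + 1, h⟩) := by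
  by_cases hc : ∃ c, IsChild T r (f i) c ∧ ∀ j : Fin m, j < i → f j ≠ c
  · exact Or.inl ((hf.2 i h).1 hc).1
  · exact Or.inr ((hf.2 i h).2 hc)

lemma step_adj (hf : IsDFSMapping T r f) (i : Fin m) (h : (i : ℕ) + 1 < m) :
    T.Adj (f i) (f ⟨(i : ℕ) + 1, h⟩) := by
  rcases step_cp hf i h with h' | h'
  · exact h'.1
  · exact h'.1

lemma exists_segment_walk (hf : IsDFSMapping T r f) :
    ∀ (d a : ℕ) (ha : a < m) (hb : a + d < m),
      ∃ w : T.Walk (f ⟨a, ha⟩) (f ⟨a + d, hb⟩),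
        ∀ x ∈ w.support, ∃ t, ∃ ht : t < m, a ≤ t ∧ t ≤ a + d ∧ f ⟨t, ht⟩ = x := by
  intro d
  induction d with
  | zero =>
    intro a ha hb
    refine ⟨SimpleGraph.Walk.nil, ?_⟩
    intro x hx
    simp only [SimpleGraph.Walk.support_nil, List.mem_singleton] at hx
    exact ⟨a, ha, le_refl _, by omega, hx.symm⟩
  | succ d ih =>
    intro a ha hb
    have hb' : a + d < m := by omega
    obtain ⟨w, hw⟩ := ih a ha hb'
    have hadj := step_adj hf ⟨a + d, hb'⟩ hb
    refine ⟨w.concat hadj, ?_⟩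
    intro x hx
    rw [SimpleGraph.Walk.support_concat, List.mem_append] at hx
    rcases hx with hx | hx
    · obtain ⟨t, ht, h1, h2, h3⟩ := hw x hx
      exact ⟨t, ht, h1, by omega, h3⟩
    · rw [List.mem_singleton] at hx
      exact ⟨a + d + 1, hb, by omega, by omega, hx.symm⟩

lemma exists_walk_between (hf : IsDFSMapping T r f) {a b : ℕ} (ha : a < m) (hb : b < m)
    (hab : a ≤ b) :
    ∃ w : T.Walk (f ⟨a, ha⟩) (f ⟨b, hb⟩),
      ∀ x ∈ w.support, ∃ t, ∃ ht : t < m, a ≤ t ∧ t ≤ b ∧ f ⟨t, ht⟩ = x := by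
  obtain ⟨w, hw⟩ := exists_segment_walk hf (b - a) a ha (by omega)
  have he : (⟨a + (b - a), by omega⟩ : Fin m) = ⟨b, hb⟩ := Fin.ext (by simp; omega)
  refine ⟨w.copy rfl (congrArg f he), ?_⟩
  intro x hx
  rw [SimpleGraph.Walk.support_copy] at hx
  obtain ⟨t, ht, h1, h2, h3⟩ := hw x hx
  exact ⟨t, ht, h1, by omega, h3⟩

/-- Once the DFS moves from a vertex to its parent, it never returns to that vertex. -/
lemma no_return (hT : T.IsTree) (hf : IsDFSMapping T r f) (i : Fin m)
    (h1 : (i : ℕ) + 1 < m) (hp : IsParent T r (f i) (f ⟨(i : ℕ) + 1, h1⟩)) :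
    ∀ k : Fin m, i < k → f k ≠ f i := by
  classical
  by_contra hcon
  push_neg at hcon
  obtain ⟨k0, hk0, hfk0⟩ := hcon
  have hex : ∃ t : ℕ, ∃ ht : t < m, (i : ℕ) < t ∧ f ⟨t, ht⟩ = f i :=
    ⟨(k0 : ℕ), k0.2, hk0, by simpa using hfk0⟩
  obtain ⟨ht, hit, hft⟩ := Nat.find_spec hex
  set t := Nat.find hex with htdef
  have hne1 : f ⟨(i : ℕ) + 1, h1⟩ ≠ f i := hp.1.ne'
  have ht2 : (i : ℕ) + 2 ≤ t := by
    rcases Nat.lt_or_ge t ((i : ℕ) + 2) with h | h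
    · exfalso
      have hti : t = (i : ℕ) + 1 := by omega
      apply hne1
      rw [← hft]
      congr 1
      exact Fin.ext hti.symm
    · exact h
  have htm1 : t - 1 < m := by omega
  have hk'1 : (t - 1) + 1 < m := by omega
  have hkk : (⟨(t - 1) + 1, hk'1⟩ : Fin m) = ⟨t, ht⟩ := Fin.ext (by simp; omega)
  by_cases hc : ∃ c, IsChild T r (f ⟨t - 1, htm1⟩) c ∧
      ∀ j : Fin m, j < ⟨t - 1, htm1⟩ → f j ≠ c
  · have hfresh := ((hf.2 ⟨t - 1, htm1⟩ hk'1).1 hc).2 i (by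
      rw [Fin.lt_def]; simp; omega)
    rw [hkk, hft] at hfresh
    exact hfresh rfl
  · have hpar := (hf.2 ⟨t - 1, htm1⟩ hk'1).2 hc
    rw [hkk, hft] at hpar
    -- hpar : IsParent T r (f ⟨t-1⟩) (f i)
    obtain ⟨w, hw⟩ := exists_walk_between hf h1 htm1 (show (i : ℕ) + 1 ≤ t - 1 by omega)
    -- the path (f ⟨i+1⟩) → (f i) → (f ⟨t-1⟩)
    have hne2 : f ⟨(i : ℕ) + 1, h1⟩ ≠ f ⟨t - 1, htm1⟩ := by
      intro hEq
      have d1 := hp.2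
      have d2 := hpar.2
      rw [hEq] at d1
      omega
    have hP : (SimpleGraph.Walk.cons hp.1.symm
        (SimpleGraph.Walk.cons hpar.1.symm SimpleGraph.Walk.nil)).IsPath := by
      simp [SimpleGraph.Walk.isPath_def, hne1, hne2, hpar.1.ne']
    have hmem : f i ∈ w.support := by
      apply tree_path_support_subset hT _ w hP
      simp
    obtain ⟨t2, ht2', hle1, hle2, hfe⟩ := hw (f i) hmem
    have : ¬ (t2 < t) := by
      intro hlt
      exact Nat.find_min hex hlt ⟨ht2', by omega, hfe⟩
    omega

/-- Between two visits of the same vertex `v = f a = f b`, every other vertex visited is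
strictly farther from the root. -/
lemma mountain (hT : T.IsTree) (hf : IsDFSMapping T r f) {a b : Fin m}
    (hab : a < b) (hv : f a = f b) (k : Fin m) (hak : a < k) (hkb : k < b)
    (hfk : f k ≠ f a) : T.dist (f a) r < T.dist (f k) r := by
  have hbm : (b : ℕ) < m := b.2
  have habn : (a : ℕ) < (b : ℕ) := hab
  have hakn : (a : ℕ) < (k : ℕ) := hak
  have hkbn : (k : ℕ) < (b : ℕ) := hkb
  have key : ∀ d : ℕ, ∀ hd : (a : ℕ) + d ≤ (b : ℕ),
      ∀ w : T.Walk (f ⟨(a : ℕ) + d, by omega⟩) r, f a ∈ w.support := by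
    intro d
    induction d with
    | zero => exact fun hd w => w.start_mem_support
    | succ d ih =>
      intro hd w
      have hjm : (a : ℕ) + d < m := by omega
      have hj1 : ((⟨(a : ℕ) + d, hjm⟩ : Fin m) : ℕ) + 1 < m := by simp; omega
      rcases step_cp hf ⟨(a : ℕ) + d, hjm⟩ hj1 with hch | hpar
      · -- child step
        have hmem : f ⟨(a : ℕ) + d, hjm⟩ ∈ w.support :=
          parent_mem_walk_support hT hch.1 hch.2 w
        have hsub := w.support_dropUntil_subset hmem
        exact hsub (ih (by omega) (w.dropUntil _ hmem))
      · by_cases hjv : f ⟨(a : ℕ) + d, hjm⟩ = f a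
        · exfalso
          have hnr := no_return hT hf ⟨(a : ℕ) + d, hjm⟩ hj1 hpar b
            (by rw [Fin.lt_def]; simp; omega)
          rw [hjv, ← hv] at hnr
          exact hnr rfl
        · have hin := ih (by omega) (SimpleGraph.Walk.cons hpar.1 w)
          rw [SimpleGraph.Walk.support_cons, List.mem_cons] at hin
          rcases hin with hin | hin
          · exact absurd hin.symm hjv
          · exact hin
  have hdesc : ∀ w : T.Walk (f k) r, f a ∈ w.support := by
    have hk2 : (⟨(a : ℕ) + ((k : ℕ) - (a : ℕ)), by omega⟩ : Fin m) = k :=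
      Fin.ext (by simp; omega)
    have h := key ((k : ℕ) - (a : ℕ)) (by omega)
    rw [hk2] at h
    exact h
  exact dist_lt_of_mem_all hT hfk hdesc

end Aux

/-- The graph `G_f` associated with a DFS-mapping `f` (consecutive indices, plus
pairs of consecutive visits of the same vertex) is path-outerplanar with witness
the natural order. -/
theorem dfs_graph_path_outerplanar {V : Type*} [Fintype V] (n : ℕ) (hn : 1 ≤ n)
    (hcard : Fintype.card V = n) (T : SimpleGraph V) (hT : T.IsTree) (r : V)
    (f : Fin (2 * n - 1) → V) (hf : IsDFSMapping T r f) :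
    IsPathOuterplanarWitness (SimpleGraph.fromRel
      (fun i j : Fin (2 * n - 1) =>
        ((i : ℕ) + 1 = (j : ℕ)) ∨
        (i < j ∧ f i = f j ∧ ∀ k : Fin (2 * n - 1), i < k → k < j → f k ≠ f i))) := by
  letI := Classical.decEq V
  constructor
  · intro i h
    rw [SimpleGraph.fromRel_adj]
    exact ⟨Fin.ne_of_val_ne (by simp), Or.inl (Or.inl (by simp))⟩
  · have edge : ∀ x y : Fin (2 * n - 1),
        (SimpleGraph.fromRel (fun i j : Fin (2 * n - 1) =>
          ((i : ℕ) + 1 = (j : ℕ)) ∨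
          (i < j ∧ f i = f j ∧ ∀ k : Fin (2 * n - 1), i < k → k < j → f k ≠ f i))).Adj x y →
        x < y →
        ((x : ℕ) + 1 = (y : ℕ)) ∨
        (f x = f y ∧ ∀ k : Fin (2 * n - 1), x < k → k < y → f k ≠ f x) := by
      intro x y hxy hlt
      rw [SimpleGraph.fromRel_adj] at hxy
      have hltn : (x : ℕ) < (y : ℕ) := hlt
      rcases hxy.2 with (h | h) | (h | h)
      · exact Or.inl h
      · exact Or.inr ⟨h.2.1, h.2.2⟩
      · omega
      · exact absurd h.1 (not_lt.mpr (le_of_lt hlt))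
    have cross : ∀ a b c d : Fin (2 * n - 1),
        (SimpleGraph.fromRel (fun i j : Fin (2 * n - 1) =>
          ((i : ℕ) + 1 = (j : ℕ)) ∨
          (i < j ∧ f i = f j ∧ ∀ k : Fin (2 * n - 1), i < k → k < j → f k ≠ f i))).Adj a b →
        (SimpleGraph.fromRel (fun i j : Fin (2 * n - 1) =>
          ((i : ℕ) + 1 = (j : ℕ)) ∨
          (i < j ∧ f i = f j ∧ ∀ k : Fin (2 * n - 1), i < k → k < j → f k ≠ f i))).Adj c d →
        a < c → c < b → b < d → False := by
      intro a b c d hab hcd hac hcb hbd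
      have hacn : (a : ℕ) < (c : ℕ) := hac
      have hcbn : (c : ℕ) < (b : ℕ) := hcb
      have hbdn : (b : ℕ) < (d : ℕ) := hbd
      have e1 := edge a b hab (lt_trans hac hcb)
      have e2 := edge c d hcd (lt_trans hcb hbd)
      rcases e1 with e1 | e1
      · omega
      rcases e2 with e2 | e2
      · omega
      have m1 : T.dist (f a) r < T.dist (f c) r := by
        have hfc : f c ≠ f a := e1.2 c hac hcb
        exact mountain hT hf (lt_trans hac hcb) e1.1 c hac hcb hfc
      have m2 : T.dist (f c) r < T.dist (f b) r := by
        have hfb : f b ≠ f c := by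
          rw [← e1.1]
          exact fun h => (e1.2 c hac hcb) h.symm
        exact mountain hT hf (lt_trans hcb hbd) e2.1 b hcb hbd hfb
      rw [← e1.1] at m2
      omega
    intro a b c d hab hcd h1 h2
    rcases le_or_gt b c with h | hbc
    · exact Or.inl h
    rcases le_or_gt d a with h | hda
    · exact Or.inr (Or.inl h)
    rcases lt_trichotomy a c with hac | hac | hac
    · refine Or.inr (Or.inr (Or.inl ⟨le_of_lt hac, ?_⟩))
      by_contra hbd
      push_neg at hbd
      exact cross a b c d hab hcd hac hbc hbd
    · rcases le_total d b with h | h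
      · exact Or.inr (Or.inr (Or.inl ⟨le_of_eq hac, h⟩))
      · exact Or.inr (Or.inr (Or.inr ⟨le_of_eq hac.symm, h⟩))
    · refine Or.inr (Or.inr (Or.inr ⟨le_of_lt hac, ?_⟩))
      by_contra hdb
      push_neg at hdb
      exact cross c d a b hcd hab hac hda hdb
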